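/- Every almost colour-critical graph $H$ with $\chi(H)=k\ge 2$ and $v(H)=q$ is a subgraph of $K_{k-1}^{+q}(2q)$, the graph obtained from the complete $(k-1)$-partite graph with all parts of size $2q$ by adding a matching of size $q$ inside the first part. Moreover, $K_{k-1}^{+q}(2q)$ has chromatic number $k$ and is itself almost colour-critical. -/

import Mathlib

open Finset

/-- Number of edges (ordered pairs) between `A` and `B`. -/
noncomputable def eBetween {V : Type*} (G : SimpleGraph V) (A B : Finset V) : ℕ :=
  Nat.card {p : V × V // p.1 ∈ A ∧ p.2 ∈ B ∧ G.Adj p.1 p.2}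

/-- Edge density between two disjoint vertex sets. -/
noncomputable def density {V : Type*} (G : SimpleGraph V) (A B : Finset V) : ℝ :=
  (eBetween G A B : ℝ) / ((A.card : ℝ) * (B.card : ℝ))

/-- Number of neighbours of `v` inside the set `S`. -/
noncomputable def degTo {V : Type*} (G : SimpleGraph V) (v : V) (S : Set V) : ℕ :=
  Nat.card {u : V // u ∈ S ∧ G.Adj v u}

/-- `G` is an `ℓ`-partite graph with (nonempty, independent) parts `P 0, …, P (ℓ-1)`. -/
def IsPartiteOn {V : Type*} (G : SimpleGraph V) {ℓ : ℕ} (P : Fin ℓ → Finset V) : Prop :=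
  (∀ i, (P i).Nonempty) ∧ (∀ i j, i ≠ j → Disjoint (P i) (P j)) ∧
  (∀ v, ∃ i, v ∈ P i) ∧ ∀ i, ∀ a ∈ P i, ∀ b ∈ P i, ¬ G.Adj a b

/-- `G` contains a copy of `H` (an injective graph homomorphism). -/
def ContainsCopy {W V : Type*} (H : SimpleGraph W) (G : SimpleGraph V) : Prop :=
  ∃ f : W → V, Function.Injective f ∧ ∀ a b, H.Adj a b → G.Adj (f a) (f b)

/-- `H` admits a colouring with `χ(H) - 1` colours in which all colour classes are
independent except the first, which induces a graph of maximum degree at most 1. -/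
def AlmostColourCritical {W : Type*} [Fintype W] (H : SimpleGraph W) : Prop :=
  ∃ k : ℕ, H.chromaticNumber = (k : ℕ∞) ∧
    ∃ φ : W → Fin (k - 1),
      (∀ a b c : W, (φ a).val = 0 → (φ b).val = 0 → (φ c).val = 0 →
        H.Adj a b → H.Adj a c → b = c) ∧
      ∀ a b : W, (φ a).val ≠ 0 → φ a = φ b → ¬ H.Adj a b

/-- `K_r^{+q}(2q)`: the complete `r`-partite graph with parts of size `2q`, together with
a perfect matching (of size `q`, pairing `2i` with `2i+1`) added inside the first part. -/
def KplusMatching (r q : ℕ) : SimpleGraph (Fin r × Fin (2 * q)) :=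
  SimpleGraph.fromRel (fun p p' => p.1 ≠ p'.1 ∨
    (p.1.val = 0 ∧ p'.1.val = 0 ∧ p.2.val / 2 = p'.2.val / 2))

theorem almost_colour_critical_subgraph_of_Kplus {W : Type*} [Fintype W]
    (H : SimpleGraph W) (k : ℕ)
    (hacc : AlmostColourCritical H) (hk : H.chromaticNumber = (k : ℕ∞)) (hk2 : 2 ≤ k) :
    ContainsCopy H (KplusMatching (k - 1) (Fintype.card W)) ∧
    (KplusMatching (k - 1) (Fintype.card W)).chromaticNumber = (k : ℕ∞) ∧
    AlmostColourCritical (KplusMatching (k - 1) (Fintype.card W)) := by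
  classical
  -- W is nonempty
  have hne : Nonempty W := by
    by_contra hempty
    have : IsEmpty W := not_nonempty_iff.mp hempty
    have h0 : H.chromaticNumber ≤ (0 : ℕ) :=
      (SimpleGraph.Colorable.of_isEmpty (G := H) 0).chromaticNumber_le
    rw [hk] at h0
    have : k ≤ 0 := by exact_mod_cast h0
    omega
  set q := Fintype.card W with hq
  have hq1 : 1 ≤ q := Fintype.card_pos
  obtain ⟨k', hk', φ, h1, h2⟩ := hacc
  have hkk : k = k' := by
    rw [hk'] at hk
    exact_mod_cast hk.symm
  subst hkk
  have e : W ≃ Fin q := Fintype.equivFin W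
  -- the matching partner function
  set m : W → W := fun a =>
    if h : (φ a).val = 0 ∧ ∃ b, (φ b).val = 0 ∧ H.Adj a b then h.2.choose else a with hm
  have Pb : ∀ a b, (φ a).val = 0 → (φ b).val = 0 → H.Adj a b → m a = b := by
    intro a b ha hb hab
    have hcond : (φ a).val = 0 ∧ ∃ b, (φ b).val = 0 ∧ H.Adj a b := ⟨ha, b, hb, hab⟩
    have hspec := hcond.2.choose_spec
    simp only [hm, dif_pos hcond]
    exact h1 a _ b ha hspec.1 hb hspec.2 hab
  have Pzero : ∀ a, (φ a).val ≠ 0 → m a = a := by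
    intro a ha
    simp only [hm]
    rw [dif_neg]
    intro hcond; exact ha hcond.1
  have Pc : ∀ a, m (m a) = a := by
    intro a
    by_cases hcond : (φ a).val = 0 ∧ ∃ b, (φ b).val = 0 ∧ H.Adj a b
    · have hma : m a = hcond.2.choose := by simp only [hm, dif_pos hcond]
      have hspec := hcond.2.choose_spec
      rw [hma]
      exact Pb _ _ hspec.1 hcond.1 hspec.2.symm
    · have : m a = a := by simp only [hm, dif_neg hcond]
      rw [this, this]
  -- position function
  set pos : W → ℕ := fun a =>
    if (e (m a)).val < (e a).val then 2 * (e (m a)).val + 1 else 2 * (e a).val with hposdef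
  have hposlt : ∀ a, pos a < 2 * q := by
    intro a
    have h1 := (e (m a)).isLt
    have h2 := (e a).isLt
    simp only [hposdef]
    split_ifs <;> omega
  -- the embedding
  set f : W → Fin (k - 1) × Fin (2 * q) := fun a => (φ a, ⟨pos a, hposlt a⟩) with hf
  have hposinj : ∀ a b, pos a = pos b → a = b := by
    intro a b hab
    simp only [hposdef] at hab
    split_ifs at hab with h1 h2 h2
    · have : e (m a) = e (m b) := Fin.ext (by omega)
      have hmm : m a = m b := e.injective this
      have := congrArg m hmm
      rwa [Pc, Pc] at this
    · omega
    · omega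
    · exact e.injective (Fin.ext (by omega))
  have hfinj : Function.Injective f := by
    intro a b hab
    simp only [hf, Prod.mk.injEq] at hab
    exact hposinj a b (congrArg Fin.val hab.2)
  have hfadj : ∀ a b, H.Adj a b → (KplusMatching (k - 1) q).Adj (f a) (f b) := by
    intro a b hab
    rw [KplusMatching, SimpleGraph.fromRel_adj]
    by_cases hphi : φ a = φ b
    · -- both in colour class 0
      have ha0 : (φ a).val = 0 := by
        by_contra ha0
        exact h2 a b ha0 hphi hab
      have hb0 : (φ b).val = 0 := by rw [← hphi]; exact ha0
      have hma : m a = b := Pb a b ha0 hb0 hab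
      have hmb : m b = a := Pb b a hb0 ha0 hab.symm
      have hne' : a ≠ b := H.ne_of_adj hab
      have hene : (e a).val ≠ (e b).val := fun h =>
        hne' (e.injective (Fin.ext h))
      have hdiv : pos a / 2 = pos b / 2 ∧ pos a ≠ pos b := by
        simp only [hposdef, hma, hmb]
        rcases lt_or_gt_of_ne hene with h | h
        · rw [if_neg (by omega), if_pos (by omega)]
          constructor <;> omega
        · rw [if_pos (by omega), if_neg (by omega)]
          constructor <;> omega
      refine ⟨?_, Or.inl (Or.inr ⟨ha0, hb0, hdiv.1⟩)⟩
      exact fun h => hdiv.2 (congrArg (fun p => (Prod.snd p).val) h)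
    · exact ⟨fun h => hphi (congrArg Prod.fst h), Or.inl (Or.inl hphi)⟩
  have hcopy : ContainsCopy H (KplusMatching (k - 1) q) := ⟨f, hfinj, hfadj⟩
  -- chromatic number of the target graph
  have hcolor : (KplusMatching (k - 1) q).Colorable k := by
    refine ⟨SimpleGraph.Coloring.mk
      (fun p => ⟨if p.1.val = 0 then (if p.2.val % 2 = 0 then 0 else k - 1) else p.1.val,
        by have := p.1.isLt; split_ifs <;> omega⟩) ?_⟩
    rintro p p' hadj
    rw [KplusMatching, SimpleGraph.fromRel_adj] at hadj
    obtain ⟨hne', hrel⟩ := hadj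
    simp only [Ne, Fin.mk.injEq]
    have hp := p.1.isLt
    have hp' := p'.1.isLt
    have key : (p.1.val = 0 ∧ p'.1.val = 0 ∧ p.2.val / 2 = p'.2.val / 2 ∧ p.2.val ≠ p'.2.val)
        ∨ p.1.val ≠ p'.1.val := by
      rcases hrel with ((h | h) | (h | h))
      · exact Or.inr (fun hv => h (Fin.ext hv))
      · refine Or.inl ⟨h.1, h.2.1, h.2.2, ?_⟩
        intro hv
        exact hne' (Prod.ext (Fin.ext (h.1.trans h.2.1.symm)) (Fin.ext hv))
      · exact Or.inr (fun hv => h (Fin.ext hv.symm))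
      · refine Or.inl ⟨h.2.1, h.1, h.2.2.symm, ?_⟩
        intro hv
        exact hne' (Prod.ext (Fin.ext (h.2.1.trans h.1.symm)) (Fin.ext hv))
    rcases key with ⟨h0, h0', hdiv, hne2⟩ | hne1
    · rw [if_pos h0, if_pos h0']
      split_ifs <;> omega
    · split_ifs <;> omega
  have hlow : (k : ℕ∞) ≤ (KplusMatching (k - 1) q).chromaticNumber := by
    rw [← hk]
    apply SimpleGraph.chromaticNumber_le_of_forall_imp
    intro n ⟨c⟩
    exact ⟨SimpleGraph.Coloring.mk (fun a => c (f a))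
      (fun hab => c.valid (hfadj _ _ hab))⟩
  have hchrom : (KplusMatching (k - 1) q).chromaticNumber = (k : ℕ∞) :=
    le_antisymm hcolor.chromaticNumber_le hlow
  refine ⟨hcopy, hchrom, k, hchrom, Prod.fst, ?_, ?_⟩
  · rintro a b c ha hb hc hab hac
    rw [KplusMatching, SimpleGraph.fromRel_adj] at hab hac
    obtain ⟨hne1, hrel1⟩ := hab
    obtain ⟨hne2, hrel2⟩ := hac
    have hdiv1 : a.2.val / 2 = b.2.val / 2 := by
      rcases hrel1 with ((h | h) | (h | h))
      · exact absurd (Fin.ext (ha.trans hb.symm)) h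
      · exact h.2.2
      · exact absurd (Fin.ext (hb.trans ha.symm)) h
      · exact h.2.2.symm
    have hdiv2 : a.2.val / 2 = c.2.val / 2 := by
      rcases hrel2 with ((h | h) | (h | h))
      · exact absurd (Fin.ext (ha.trans hc.symm)) h
      · exact h.2.2
      · exact absurd (Fin.ext (hc.trans ha.symm)) h
      · exact h.2.2.symm
    have hab2 : a.2.val ≠ b.2.val := by
      intro hv
      exact hne1 (Prod.ext (Fin.ext (ha.trans hb.symm)) (Fin.ext hv))
    have hac2 : a.2.val ≠ c.2.val := by
      intro hv
      exact hne2 (Prod.ext (Fin.ext (ha.trans hc.symm)) (Fin.ext hv))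
    exact Prod.ext (Fin.ext (hb.trans hc.symm)) (Fin.ext (by omega))
  · rintro a b ha hab ⟨hne', hrel⟩
    rcases hrel with ((h | h) | (h | h))
    · exact h hab
    · exact ha h.1
    · exact h hab.symm
    · exact ha h.2.1
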